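/- arXiv:2304.09283 — 5 statements merged into one kernel-verified Lean document; each statement's English description precedes it below -/
import Mathlib

section
/- With offsets defined by o_0 = 0 and o_{i+1} = max(0, o_i + s_i - B), if ∑_{i=0}^{m-1} s_i ≤ m·B and o_m = 0, then all m·B table cells suffice: for every i, the block occupying positions i·B + o_i through i·B + o_i + s_i - 1 lies within [0, m·B - 1]. -/
/-- If the total number of elements is at most m·B and the final offset o m is 0,
then every block i (occupying positions i·B + o i .. i·B + o i + s i - 1) fits
within the table positions 0 .. m·B - 1. -/
theorem slick_blocks_fit_in_table (B : ℤ) (hB : 0 < B) (m : ℕ) (s : ℕ → ℤ)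
    (hs : ∀ i, 0 ≤ s i) (hsB : ∀ i, s i ≤ 2 * B)
    (o : ℕ → ℤ) (h0 : o 0 = 0)
    (hrec : ∀ i, o (i + 1) = max 0 (o i + s i - B))
    (htotal : (∑ i ∈ Finset.range m, s i) ≤ (m : ℤ) * B)
    (hlast : o m = 0) :
    ∀ i < m, 0 ≤ (i : ℤ) * B + o i ∧ (i : ℤ) * B + o i + s i ≤ (m : ℤ) * B := by
  have onn : ∀ i, 0 ≤ o i := by
    intro i
    induction i with
    | zero => simp [h0]
    | succ n ih => rw [hrec n]; exact le_max_left _ _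
  have step : ∀ i, o i ≤ o (i + 1) + B := by
    intro i
    have h1 : o i + s i - B ≤ o (i + 1) := by rw [hrec i]; exact le_max_right _ _
    have := hs i
    linarith
  have key : ∀ k, k ≤ m → o (m - k) ≤ (k : ℤ) * B := by
    intro k
    induction k with
    | zero => intro _; simp [hlast]
    | succ n ih =>
      intro hk
      have hnm : n ≤ m := Nat.le_of_succ_le hk
      have h1 : m - (n + 1) + 1 = m - n := by omega
      have h2 : o (m - (n + 1)) ≤ o (m - n) + B := by
        have := step (m - (n + 1)); rwa [h1] at this
      have h3 := ih hnm
      push_cast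
      linarith
  intro i hi
  refine ⟨add_nonneg (by positivity) (onn i), ?_⟩
  have h1 : o i + s i ≤ o (i + 1) + B := by
    have h2 : o i + s i - B ≤ o (i + 1) := by rw [hrec i]; exact le_max_right _ _
    linarith
  have h3 : o (i + 1) ≤ ((m - (i + 1) : ℕ) : ℤ) * B := by
    have := key (m - (i + 1)) (by omega)
    have he : m - (m - (i + 1)) = i + 1 := by omega
    rwa [he] at this
  have hc : ((m - (i + 1) : ℕ) : ℤ) = (m : ℤ) - (i + 1) := by
    push_cast [Nat.cast_sub (by omega : i + 1 ≤ m)]; ring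
  rw [hc] at h3
  nlinarith [onn i, hs i]
end

section
/- Blocks defined by the sliding-block offset recursion never overlap: for all i < j, the position ranges [i·B + o_i, i·B + o_i + s_i - 1] and [j·B + o_j, j·B + o_j + s_j - 1] are disjoint. -/
/-- Blocks under the sliding-block offset recursion never overlap: for i < j the
position ranges [i·B + o i, i·B + o i + s i) and [j·B + o j, j·B + o j + s j)
are disjoint. -/
theorem slick_blocks_disjoint (B : ℤ) (hB : 0 < B) (s : ℕ → ℤ) (hs : ∀ i, 0 ≤ s i)
    (o : ℕ → ℤ) (h0 : o 0 = 0)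
    (hrec : ∀ i, o (i + 1) = max 0 (o i + s i - B)) :
    ∀ i j : ℕ, i < j →
      Disjoint (Finset.Ico ((i : ℤ) * B + o i) ((i : ℤ) * B + o i + s i))
               (Finset.Ico ((j : ℤ) * B + o j) ((j : ℤ) * B + o j + s j)) := by
  have key : ∀ i j : ℕ, i < j → (i : ℤ) * B + o i + s i ≤ (j : ℤ) * B + o j := by
    intro i j hij
    induction j with
    | zero => omega
    | succ k ih =>
      have hstep : (k : ℤ) * B + o k + s k ≤ ((k + 1 : ℕ) : ℤ) * B + o (k + 1) := by
        have := hrec k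
        have : o k + s k - B ≤ o (k + 1) := by rw [hrec k]; exact le_max_right _ _
        push_cast
        linarith
      rcases Nat.lt_or_ge i k with h | h
      · have := ih h
        have hk : (0 : ℤ) ≤ s k := hs k
        linarith
      · have : i = k := by omega
        subst this
        exact hstep
  intro i j hij
  have h := key i j hij
  rw [Finset.disjoint_left]
  intro a ha hb
  simp only [Finset.mem_Ico] at ha hb
  omega
end

section
/- In the greedy build, the number of elements that must be bumped from block i to satisfy all three constraints is exactly max(0, |b| - B̂, o + iB + |b| - m, o + |b| - B - ô), and after bumping this many elements the resulting next offset max(0, o + |b'| - B) is at most ô, the block size |b'| is at most B̂, and the block fits within the table of size m. -/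
/-- Greedy build: the number of elements that must be bumped from block i is
exactly excess = max(0, max(|b| - B̂, max(o + iB + |b| - m, o + |b| - B - ô))):
after bumping `excess` elements all three constraints hold (block size at most
B̂, next offset at most ô, block ends within the table of size m), and bumping
any smaller nonnegative number violates one of them. -/
theorem slick_greedy_excess (B Bmax omax m o b : ℤ) (i : ℕ)
    (hB : 0 < B) (hBmax : B ≤ Bmax) (homax : 0 ≤ omax)
    (ho0 : 0 ≤ o) (ho : o ≤ omax) (hb : 0 ≤ b) :
    let excess := max 0 (max (b - Bmax) (max (o + (i : ℤ) * B + b - m) (o + b - B - omax)))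
    (b - excess ≤ Bmax) ∧
    (max 0 (o + (b - excess) - B) ≤ omax) ∧
    (o + (i : ℤ) * B + (b - excess) ≤ m) ∧
    (∀ k : ℤ, 0 ≤ k → k < excess →
      ¬ ((b - k ≤ Bmax) ∧ max 0 (o + (b - k) - B) ≤ omax ∧
          o + (i : ℤ) * B + (b - k) ≤ m)) := by
  intro excess
  have h1 : 0 ≤ excess := le_max_left _ _
  have h2 : b - Bmax ≤ excess := le_max_of_le_right (le_max_left _ _)
  have h3 : o + (i : ℤ) * B + b - m ≤ excess :=
    le_max_of_le_right (le_max_of_le_right (le_max_left _ _))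
  have h4 : o + b - B - omax ≤ excess :=
    le_max_of_le_right (le_max_of_le_right (le_max_right _ _))
  have hchoice : excess = 0 ∨ excess = b - Bmax ∨
      excess = o + (i : ℤ) * B + b - m ∨ excess = o + b - B - omax := by
    have he : excess = max 0 (max (b - Bmax) (max (o + (i : ℤ) * B + b - m) (o + b - B - omax))) := rfl
    rw [he]
    rcases max_choice 0 (max (b - Bmax) (max (o + (i : ℤ) * B + b - m) (o + b - B - omax)))
      with h | h <;> rw [h]
    · exact Or.inl rfl
    rcases max_choice (b - Bmax) (max (o + (i : ℤ) * B + b - m) (o + b - B - omax))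
      with h' | h' <;> rw [h']
    · exact Or.inr (Or.inl rfl)
    rcases max_choice (o + (i : ℤ) * B + b - m) (o + b - B - omax) with h'' | h'' <;> rw [h'']
    · exact Or.inr (Or.inr (Or.inl rfl))
    · exact Or.inr (Or.inr (Or.inr rfl))
  refine ⟨by omega, ?_, by omega, ?_⟩
  · simp only [max_le_iff]; omega
  · intro k hk0 hk
    simp only [max_le_iff]
    omega
end

section
/- Correctness of the find invariant: if every stored element e is either in the backyard (when δ(key(e)) < t_{h(key(e))}) or stored at some position in blockRange(h(key(e))) = [h(key(e))·B + o_{h(key(e))}, (h(key(e))+1)·B + o_{h(key(e))+1} - g_{h(key(e))} - 1], and distinct blocks occupy disjoint ranges, then the find procedure (check threshold, else scan blockRange) returns the element with key k if and only if some stored element has key k. -/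
/-- Correctness of `find`: under the Slick invariants — every element of the
represented set S is either bumped to the backyard T' (exactly when its
threshold hash is below its block's threshold) or stored at some position of
its block's range; the backyard and table only contain elements of S placed
consistently; block ranges are disjoint; keys of S are distinct — the find
procedure (check the threshold and search the backyard, else scan the block
range) finds key k iff some element of S has key k. -/
theorem slick_find_correct {K V : Type*} (m B : ℕ) (hB : 0 < B)
    (h : K → ℕ) (δ : K → ℕ) (t o g : ℕ → ℕ)
    (T : ℕ → K × V) (S T' : Set (K × V))
    (blockRange : ℕ → Finset ℕ)
    (hrange : ∀ i, blockRange i = Finset.Ico (i * B + o i) ((i + 1) * B + o (i + 1) - g i))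
    -- invariant (1): each element of S is bumped iff below threshold, and is
    -- stored in the backyard resp. in its block's range accordingly
    (hS : ∀ e ∈ S, (δ e.1 < t (h e.1) → e ∈ T') ∧
      (¬ δ e.1 < t (h e.1) → ∃ j ∈ blockRange (h e.1), T j = e))
    -- soundness of the backyard
    (hT' : ∀ e ∈ T', e ∈ S ∧ δ e.1 < t (h e.1))
    -- soundness of the table: positions in block i hold elements of S hashed
    -- to block i that are not bumped
    (hT : ∀ i, ∀ j ∈ blockRange i, T j ∈ S ∧ h (T j).1 = i ∧ ¬ δ (T j).1 < t (h (T j).1))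
    -- invariant (2): block ranges of distinct blocks are disjoint
    (hdisj : ∀ i i', i ≠ i' → Disjoint (blockRange i) (blockRange i'))
    -- invariant (3): keys in S are distinct
    (hkeys : ∀ e ∈ S, ∀ e' ∈ S, e.1 = e'.1 → e = e') :
    ∀ k : K,
      (δ k < t (h k) → ((∃ e ∈ T', e.1 = k) ↔ ∃ e ∈ S, e.1 = k)) ∧
      (¬ δ k < t (h k) →
        ((∃ j ∈ blockRange (h k), (T j).1 = k) ↔ ∃ e ∈ S, e.1 = k)) := by
  intro k
  constructor
  · intro hlt
    constructor
    · rintro ⟨e, he, hek⟩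
      exact ⟨e, (hT' e he).1, hek⟩
    · rintro ⟨e, heS, hek⟩
      exact ⟨e, (hS e heS).1 (hek ▸ hlt), hek⟩
  · intro hnlt
    constructor
    · rintro ⟨j, hj, hjk⟩
      exact ⟨T j, (hT (h k) j hj).1, hjk⟩
    · rintro ⟨e, heS, hek⟩
      obtain ⟨j, hj, hje⟩ := (hS e heS).2 (hek ▸ hnlt)
      exact ⟨j, hek ▸ hj, by rw [hje, hek]⟩
end

section
/- Deletion preserves the Slick invariant: if the table satisfies the block-layout invariant (each block i's elements stored contiguously in [blockStart(i), blockEnd(i)] with blockEnd(i) = iB + B + o_{i+1} - g_i - 1), then overwriting the found element at position j with the element at blockEnd(h(k)) and incrementing g_{h(k)} yields a state whose represented set is the old set minus the element with key k, and which still satisfies the invariant. -/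
/-- Deletion preserves the Slick invariant: if block i occupies positions
[iB + o i, iB + B + o (i+1) - g i) (contiguous, disjoint across blocks, all its
elements hashing to i, keys at distinct occupied positions distinct), the key k
is stored at position j of its block h k, then overwriting T j with the
element at the block's last position and incrementing g (h k) yields a state
whose represented set is the old set minus the element with key k, and which
still satisfies the invariant. -/
theorem slick_delete_correct {K V : Type*} (M B : ℕ) (hB : 0 < B)
    (h : K → ℕ) (o g : ℕ → ℕ) (T : ℕ → K × V) (k : K) (j : ℕ)
    (start fin : ℕ → ℕ)
    (hstart : ∀ i, start i = i * B + o i)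
    (hfin : ∀ i, fin i = i * B + B + o (i + 1) - g i)
    (hne : ∀ i < M, start i ≤ fin i)
    (hdisj : ∀ i < M, ∀ i' < M, i ≠ i' →
      Disjoint (Finset.Ico (start i) (fin i)) (Finset.Ico (start i') (fin i')))
    (hhash : ∀ i < M, ∀ x ∈ Finset.Ico (start i) (fin i), h ((T x).1) = i)
    (hinj : ∀ i < M, ∀ i' < M, ∀ x ∈ Finset.Ico (start i) (fin i),
      ∀ x' ∈ Finset.Ico (start i') (fin i'), (T x).1 = (T x').1 → x = x')
    (hkm : h k < M) (hj : j ∈ Finset.Ico (start (h k)) (fin (h k)))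
    (hkey : (T j).1 = k) :
    let T2 := Function.update T j (T (fin (h k) - 1))
    let g2 := Function.update g (h k) (g (h k) + 1)
    let fin2 : ℕ → ℕ := fun i => i * B + B + o (i + 1) - g2 i
    -- the represented set is the old set minus the element with key k
    ({e | ∃ i < M, ∃ x ∈ Finset.Ico (start i) (fin2 i), T2 x = e} =
      {e | ∃ i < M, ∃ x ∈ Finset.Ico (start i) (fin i), T x = e} \ {e | e.1 = k}) ∧
    -- block-layout invariant is preserved
    (∀ i < M, ∀ x ∈ Finset.Ico (start i) (fin2 i), h ((T2 x).1) = i) ∧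
    (∀ i < M, ∀ i' < M, i ≠ i' →
      Disjoint (Finset.Ico (start i) (fin2 i)) (Finset.Ico (start i') (fin2 i'))) ∧
    (∀ i < M, ∀ i' < M, ∀ x ∈ Finset.Ico (start i) (fin2 i),
      ∀ x' ∈ Finset.Ico (start i') (fin2 i'), (T2 x).1 = (T2 x').1 → x = x') := by
  intro T2 g2 fin2
  have hjlt : j < fin (h k) := (Finset.mem_Ico.mp hj).2
  have hjge : start (h k) ≤ j := (Finset.mem_Ico.mp hj).1
  have hLmem : fin (h k) - 1 ∈ Finset.Ico (start (h k)) (fin (h k)) :=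
    Finset.mem_Ico.mpr ⟨by omega, by omega⟩
  have hfin2_eq : ∀ i, i ≠ h k → fin2 i = fin i := by
    intro i hi
    show i * B + B + o (i + 1) - g2 i = fin i
    rw [show g2 i = g i from Function.update_of_ne hi _ _, hfin]
  have hfin2_i0 : fin2 (h k) = fin (h k) - 1 := by
    show h k * B + B + o (h k + 1) - g2 (h k) = fin (h k) - 1
    rw [show g2 (h k) = g (h k) + 1 from Function.update_self _ _ _, hfin]
    omega
  have hsub : ∀ i, Finset.Ico (start i) (fin2 i) ⊆ Finset.Ico (start i) (fin i) := by
    intro i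
    apply Finset.Ico_subset_Ico_right
    by_cases hi : i = h k
    · subst hi; rw [hfin2_i0]; omega
    · rw [hfin2_eq i hi]
  have hT2 : ∀ x, x ≠ j → T2 x = T x := fun x hx => Function.update_of_ne hx _ _
  have hT2j : T2 j = T (fin (h k) - 1) := Function.update_self _ _ _
  have hcase : ∀ i, i < M → ∀ x ∈ Finset.Ico (start i) (fin2 i), x = j →
      i = h k ∧ x < fin (h k) - 1 := by
    intro i hiM x hx hxj
    by_cases hi : i = h k
    · subst hi
      refine ⟨rfl, ?_⟩
      rw [hfin2_i0] at hx
      exact (Finset.mem_Ico.mp hx).2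
    · exfalso
      subst hxj
      exact Finset.disjoint_left.mp (hdisj i hiM (h k) hkm hi) (hsub i hx) hj
  have hkuniq : ∀ i, i < M → ∀ x ∈ Finset.Ico (start i) (fin i), (T x).1 = k → x = j :=
    fun i hi x hx hxk => hinj i hi (h k) hkm x hx j hj (by rw [hxk, hkey])
  refine ⟨?_, ?_, ?_, ?_⟩
  · ext e
    simp only [Set.mem_setOf_eq, Set.mem_diff]
    constructor
    · rintro ⟨i, hiM, x, hx, rfl⟩
      by_cases hxj : x = j
      · obtain ⟨hii, hxL⟩ := hcase i hiM x hx hxj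
        subst hii; subst hxj
        refine ⟨⟨h k, hkm, fin (h k) - 1, hLmem, by rw [hT2j]⟩, ?_⟩
        intro hk1
        rw [hT2j] at hk1
        have := hkuniq (h k) hkm _ hLmem hk1
        omega
      · rw [hT2 x hxj]
        exact ⟨⟨i, hiM, x, hsub i hx, rfl⟩, fun hk1 => hxj (hkuniq i hiM x (hsub i hx) hk1)⟩
    · rintro ⟨⟨i, hiM, x, hx, rfl⟩, hnk⟩
      have hxj : x ≠ j := fun hh => hnk (by rw [hh, hkey])
      by_cases hi : i = h k
      · subst hi
        by_cases hxL : x = fin (h k) - 1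
        · have hjne : j ≠ fin (h k) - 1 := fun hh => hxj (hxL.trans hh.symm)
          refine ⟨h k, hkm, j, ?_, by rw [hT2j, hxL]⟩
          rw [hfin2_i0]
          exact Finset.mem_Ico.mpr ⟨hjge, by omega⟩
        · have hx' := Finset.mem_Ico.mp hx
          refine ⟨h k, hkm, x, ?_, hT2 x hxj⟩
          rw [hfin2_i0]
          exact Finset.mem_Ico.mpr ⟨hx'.1, by omega⟩
      · exact ⟨i, hiM, x, by rw [hfin2_eq i hi]; exact hx, hT2 x hxj⟩
  · intro i hiM x hx
    by_cases hxj : x = j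
    · obtain ⟨hii, _⟩ := hcase i hiM x hx hxj
      subst hii; subst hxj
      rw [hT2j]
      exact hhash (h k) hkm _ hLmem
    · rw [hT2 x hxj]
      exact hhash i hiM x (hsub i hx)
  · intro i hi i' hi' hne'
    exact Finset.disjoint_of_subset_left (hsub i)
      (Finset.disjoint_of_subset_right (hsub i') (hdisj i hi i' hi' hne'))
  · intro i hiM i' hiM' x hx x' hx' hkeq
    by_cases hxj : x = j <;> by_cases hxj' : x' = j
    · rw [hxj, hxj']
    · exfalso
      obtain ⟨hii, hxL⟩ := hcase i hiM x hx hxj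
      rw [hxj, hT2j, hT2 x' hxj'] at hkeq
      have heq : fin (h k) - 1 = x' := hinj (h k) hkm i' hiM' _ hLmem x' (hsub i' hx') hkeq
      by_cases hi' : i' = h k
      · subst hi'
        rw [hfin2_i0] at hx'
        have := (Finset.mem_Ico.mp hx').2
        omega
      · exact Finset.disjoint_left.mp (hdisj (h k) hkm i' hiM' (Ne.symm hi')) hLmem
          (heq ▸ hsub i' hx')
    · exfalso
      obtain ⟨hii, hxL⟩ := hcase i' hiM' x' hx' hxj'
      rw [hxj', hT2j, hT2 x hxj] at hkeq
      have heq : x = fin (h k) - 1 := hinj i hiM (h k) hkm x (hsub i hx) _ hLmem hkeq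
      by_cases hi : i = h k
      · subst hi
        rw [hfin2_i0] at hx
        have := (Finset.mem_Ico.mp hx).2
        omega
      · exact Finset.disjoint_left.mp (hdisj i hiM (h k) hkm hi) (hsub i hx) (heq ▸ hLmem)
    · rw [hT2 x hxj, hT2 x' hxj'] at hkeq
      exact hinj i hiM i' hiM' x (hsub i hx) x' (hsub i' hx') hkeq
end
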